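/- For any positive integer v, the posets (M^v, A_{v,·}) and (M_v, A_{·,v}) are dual: there exists a bijection τ from M^v (all monomials in x_1,…,x_v) to M_v (all monomials of total degree v in x_1,x_2,…) such that for all monomials a, b ∈ M^v, (a,b) ∈ A_{v,·} if and only if (τ(b), τ(a)) ∈ A_{·,v}. -/

import Mathlib

/-- The free abelian monoid `M` on variables `x₁, x₂, …`, identified with
finitely supported exponent vectors; index `i : ℕ` represents the variable `x_{i+1}`. -/
abbrev Mon : Type := ℕ →₀ ℕ

/-- Total degree of a monomial. -/
def deg (m : Mon) : ℕ := m.sum fun _ v => v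

/-- `m` is a monomial in the first `n` variables, i.e. `m ∈ Mⁿ`. -/
def InVars (n : ℕ) (m : Mon) : Prop := ∀ i ∈ m.support, i < n

/-- Elementary move: `m = (x_i / x_j) · m'` for some `i < j` with `x_j ∣ m'`. -/
def ElemMove (m m' : Mon) : Prop :=
  ∃ i j : ℕ, i < j ∧ m + Finsupp.single j 1 = m' + Finsupp.single i 1

/-- Stable move: `m = (x_i / x_s) · m'` where `s = maxsupp m'` and `i < s`. -/
def StableMove (m m' : Mon) : Prop :=
  ∃ s i : ℕ, i < s ∧ m' s ≠ 0 ∧ (∀ t, s < t → m' t = 0) ∧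
    m + Finsupp.single s 1 = m' + Finsupp.single i 1

/-- The divisibility relation `D`: `(m, m') ∈ D` iff `m'` divides `m`. -/
def Dvd' (m m' : Mon) : Prop := ∃ t : Mon, m = m' + t

/-- The strongly stable partial order `A_{n,d}` on monomials of degree `d`
in the first `n` variables: reflexive–transitive closure of elementary moves
within `M_d^n`. -/
def Asub (n d : ℕ) (m m' : Mon) : Prop :=
  Relation.ReflTransGen
    (fun a b => InVars n a ∧ InVars n b ∧ deg a = d ∧ deg b = d ∧ ElemMove a b) m m'

/-- `A_{·,·} = rtr(D ∪ ⋃_{n,d} A_{n,d})`. -/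
def Aall : Mon → Mon → Prop :=
  Relation.ReflTransGen (fun a b => Dvd' a b ∨ ∃ n d, Asub n d a b)

/-- For any positive integer `v`, the posets `(M^v, A_{v,·})`
and `(M_v, A_{·,v})` are dual: there is a bijection `τ` from `M^v` (monomials in
`x₁,…,x_v`) to `M_v` (monomials of total degree `v`) such that `(a, b) ∈ A_{v,·}`
iff `(τ b, τ a) ∈ A_{·,v}`, both orders being restrictions of `A_{·,·}`. -/
def L (t : ℕ) (m : Mon) : ℕ := ∑ i ∈ Finset.range (t+1), m i

lemma L_add (t : ℕ) (a b : Mon) : L t (a + b) = L t a + L t b := by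
  simp [L, Finset.sum_add_distrib]

lemma L_single (t j c : ℕ) : L t (Finsupp.single j c) = if j ≤ t then c else 0 := by
  rw [L]
  rw [show (∑ i ∈ Finset.range (t+1), (Finsupp.single j c) i)
      = ∑ i ∈ Finset.range (t+1), if j = i then c else 0 from
    Finset.sum_congr rfl (fun i _ => by rw [Finsupp.single_apply])]
  rw [Finset.sum_ite_eq]
  simp [Nat.lt_succ_iff]

lemma L_zero_eq (m : Mon) : L 0 m = m 0 := by simp [L]

lemma L_succ (t : ℕ) (m : Mon) : L (t+1) m = L t m + m (t+1) := by
  rw [L, Finset.sum_range_succ]; rfl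

lemma L_mono (m : Mon) : Monotone (fun t => L t m) := by
  intro s t h
  exact Finset.sum_le_sum_of_subset (Finset.range_subset_range.mpr (Nat.succ_le_succ h))

lemma L_eq_deg {t : ℕ} {m : Mon} (h : ∀ i, t < i → m i = 0) : L t m = deg m := by
  rw [deg, Finsupp.sum_of_support_subset m (s := Finset.range (t+1))
    (fun i hi => Finset.mem_range.mpr (by
      by_contra hc
      exact (Finsupp.mem_support_iff.mp hi) (h i (by omega)))) (fun _ v => v) (fun _ _ => rfl)]
  rfl

lemma deg_add (a b : Mon) : deg (a + b) = deg a + deg b := by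
  rw [deg, deg, deg, Finsupp.sum_add_index'] <;> simp

lemma deg_single (j c : ℕ) : deg (Finsupp.single j c) = c := by
  rw [deg, Finsupp.sum_single_index]; rfl

lemma deg_zero : deg 0 = 0 := by simp [deg]

lemma eq_of_L_eq {a b : Mon} (h : ∀ t, L t a = L t b) : a = b := by
  ext t
  cases t with
  | zero => have := h 0; rwa [L_zero_eq, L_zero_eq] at this
  | succ k =>
    have h1 := h k
    have h2 := h (k+1)
    rw [L_succ, L_succ] at h2
    omega

lemma L_le_of_elem {a b : Mon} (h : ElemMove a b) (t : ℕ) : L t b ≤ L t a := by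
  obtain ⟨i, j, hij, heq⟩ := h
  have := congrArg (L t) heq
  rw [L_add, L_add, L_single, L_single] at this
  split_ifs at this <;> omega

lemma L_le_of_asub {n d : ℕ} {a b : Mon} (h : Asub n d a b) (t : ℕ) : L t b ≤ L t a := by
  induction h with
  | refl => exact le_rfl
  | tail _ hstep ih => exact le_trans (L_le_of_elem hstep.2.2.2.2 t) ih

lemma L_le_of_aall {a b : Mon} (h : Aall a b) (t : ℕ) : L t b ≤ L t a := by
  induction h with
  | refl => exact le_rfl
  | tail _ hstep ih =>
    refine le_trans ?_ ih
    rcases hstep with ⟨c, rfl⟩ | ⟨n, d, hsub⟩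
    · rw [L_add]; omega
    · exact L_le_of_asub hsub t

lemma stageB (b : Mon) (N : ℕ) (hb : ∀ i, N < i → b i = 0) :
    ∀ μ a, (∑ t ∈ Finset.range (N+1), L t a) = μ →
      (∀ i, N < i → a i = 0) → deg a = deg b → (∀ t, L t b ≤ L t a) → Aall a b := by
  intro μ
  induction μ using Nat.strong_induction_on with
  | _ μ IH =>
  intro a hμ ha hdeg hL
  by_cases hab : a = b
  · exact hab ▸ Relation.ReflTransGen.refl
  have hLN : ∀ t, N ≤ t → L t a = L t b := by
    intro t ht
    rw [L_eq_deg (fun i hi => ha i (by omega)), L_eq_deg (fun i hi => hb i (by omega)), hdeg]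
  have hlt : ∃ t, L t b < L t a := by
    by_contra hc
    push_neg at hc
    exact hab (eq_of_L_eq fun t => le_antisymm (hc t) (hL t))
  classical
  set i := Nat.find hlt with hidef
  have hi : L i b < L i a := Nat.find_spec hlt
  have hmin : ∀ t, t < i → L t a = L t b := by
    intro t ht
    exact le_antisymm (by have := Nat.find_min hlt ht; omega) (hL t)
  have hiN : i < N := by
    by_contra hc
    have := hLN i (by omega)
    omega
  have hai : 0 < a i := by
    cases hi' : i with
    | zero =>
      have := hi
      rw [hi', L_zero_eq, L_zero_eq] at this
      omega
    | succ k =>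
      have h1 : L k a = L k b := hmin k (by omega)
      have h2 := hi
      rw [hi', L_succ, L_succ] at h2
      omega
  have hj : ∃ t, i < t ∧ L t a ≤ L t b := ⟨N, hiN, le_of_eq (hLN N le_rfl)⟩
  set j := Nat.find hj with hjdef
  obtain ⟨hij, hjle⟩ : i < j ∧ L j a ≤ L j b := Nat.find_spec hj
  have hjN : j ≤ N := Nat.find_min' hj ⟨hiN, le_of_eq (hLN N le_rfl)⟩
  have hjmin : ∀ t, i ≤ t → t < j → L t b < L t a := by
    intro t hit htj
    rcases eq_or_lt_of_le hit with rfl | hlt'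
    · exact hi
    · have := Nat.find_min hj htj
      push_neg at this
      exact this hlt'
  set a' : Mon := a + Finsupp.single j 1 - Finsupp.single i 1 with ha'def
  have key : a + Finsupp.single j 1 = a' + Finsupp.single i 1 := by
    ext t
    rw [Finsupp.add_apply, Finsupp.add_apply, ha'def, Finsupp.tsub_apply,
      Finsupp.add_apply]
    rcases eq_or_ne t i with rfl | hti
    · simp [Finsupp.single_apply, (by omega : i ≠ j)]
      omega
    · simp [Finsupp.single_apply, Ne.symm hti]
  have hLa' : ∀ t, L t a + (if j ≤ t then 1 else 0) = L t a' + (if i ≤ t then 1 else 0) := by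
    intro t
    have := congrArg (L t) key
    rw [L_add, L_add, L_single, L_single] at this
    exact this
  have hdeg' : deg a' = deg a := by
    have := congrArg deg key
    rw [deg_add, deg_add, deg_single, deg_single] at this
    omega
  have ha' : ∀ t, N < t → a' t = 0 := by
    intro t ht
    have := congrArg (fun f : Mon => f t) key
    simp only [Finsupp.add_apply, Finsupp.single_apply] at this
    rw [if_neg (by omega), if_neg (by omega)] at this
    have h0 := ha t ht
    omega
  have hLle : ∀ t, L t a' ≤ L t a := by
    intro t
    have := hLa' t
    split_ifs at this <;> omega
  have hmeas : (∑ t ∈ Finset.range (N+1), L t a') < ∑ t ∈ Finset.range (N+1), L t a := by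
    refine Finset.sum_lt_sum (fun t _ => hLle t) ⟨i, Finset.mem_range.mpr (by omega), ?_⟩
    have := hLa' i
    rw [if_neg (by omega), if_pos le_rfl] at this
    have hbnn : 0 ≤ L i b := Nat.zero_le _
    omega
  have hL' : ∀ t, L t b ≤ L t a' := by
    intro t
    have := hLa' t
    by_cases h1 : j ≤ t
    · rw [if_pos h1, if_pos (by omega)] at this
      have := hL t
      omega
    · by_cases h2 : i ≤ t
      · rw [if_neg h1, if_pos h2] at this
        have := hjmin t h2 (by omega)
        omega
      · rw [if_neg h1, if_neg h2] at this
        have := hL t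
        omega
  have hInA : InVars (N+1) a := by
    intro t ht
    have := Finsupp.mem_support_iff.mp ht
    by_contra hc
    exact this (ha t (by omega))
  have hInA' : InVars (N+1) a' := by
    intro t ht
    have := Finsupp.mem_support_iff.mp ht
    by_contra hc
    exact this (ha' t (by omega))
  have hstep : Asub (N+1) (deg a) a a' :=
    Relation.ReflTransGen.single ⟨hInA, hInA', rfl, hdeg', ⟨i, j, hij, key⟩⟩
  have htail : Aall a' b :=
    IH _ (hμ ▸ hmeas) a' rfl ha' (by omega) hL'
  exact Relation.ReflTransGen.head (Or.inr ⟨N+1, deg a, hstep⟩) htail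

lemma deg_pos_of_ne_zero {a : Mon} (h : a ≠ 0) : 0 < deg a := by
  obtain ⟨i, hi⟩ := Finsupp.ne_iff.mp h
  simp only [Finsupp.coe_zero, Pi.zero_apply] at hi
  have hmem : i ∈ a.support := Finsupp.mem_support_iff.mpr hi
  calc 0 < a i := Nat.pos_of_ne_zero hi
  _ ≤ ∑ j ∈ a.support, a j := Finset.single_le_sum (fun _ _ => Nat.zero_le _) hmem
  _ = deg a := rfl

lemma aall_of_L : ∀ d a b, deg a = d → (∀ t, L t b ≤ L t a) → Aall a b := by
  intro d
  induction d using Nat.strong_induction_on with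
  | _ d IH =>
  intro a b hd hL
  classical
  set N := (a.support ∪ b.support).sup id with hN
  have haN : ∀ i, N < i → a i = 0 := by
    intro i hi
    by_contra hc
    have : i ∈ a.support ∪ b.support := Finset.mem_union_left _ (Finsupp.mem_support_iff.mpr hc)
    have := Finset.le_sup (f := id) this
    simp only [id] at this
    omega
  have hbN : ∀ i, N < i → b i = 0 := by
    intro i hi
    by_contra hc
    have : i ∈ a.support ∪ b.support := Finset.mem_union_right _ (Finsupp.mem_support_iff.mpr hc)
    have := Finset.le_sup (f := id) this
    simp only [id] at this
    omega
  have hdegle : deg b ≤ deg a := by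
    have := hL N
    rwa [L_eq_deg (fun i h => haN i h), L_eq_deg (fun i h => hbN i h)] at this
  rcases eq_or_lt_of_le hdegle with heq | hlt
  · exact stageB b N hbN _ a rfl haN heq.symm hL
  · -- deg b < deg a, remove top variable of a
    have hane : a ≠ 0 := by
      intro h
      rw [h] at hlt
      simp [deg, Finsupp.sum_zero_index] at hlt
    have hsne : a.support.Nonempty := Finsupp.support_nonempty_iff.mpr hane
    set i := a.support.max' hsne with hidef
    have hai : a i ≠ 0 := Finsupp.mem_support_iff.mp (a.support.max'_mem hsne)
    have hmax : ∀ t, i < t → a t = 0 := by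
      intro t ht
      by_contra hc
      have := Finset.le_max' a.support t (Finsupp.mem_support_iff.mpr hc)
      omega
    set a' : Mon := a - Finsupp.single i 1 with ha'def
    have key : a = a' + Finsupp.single i 1 := by
      ext t
      rw [Finsupp.add_apply, ha'def, Finsupp.tsub_apply]
      rcases eq_or_ne t i with rfl | hti
      · simp [Finsupp.single_apply]
        omega
      · simp [Finsupp.single_apply, Ne.symm hti]
    have hdeg' : deg a' + 1 = deg a := by
      have := congrArg deg key
      rw [deg_add, deg_single] at this
      omega
    have hL' : ∀ t, L t b ≤ L t a' := by
      intro t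
      have hk := congrArg (L t) key
      rw [L_add, L_single] at hk
      by_cases h1 : i ≤ t
      · rw [if_pos h1] at hk
        have h2 : L t a = deg a := L_eq_deg (fun s hs => hmax s (by omega))
        have h3 : L t b ≤ deg b := by
          rw [← L_eq_deg (m := b) (t := max t N) (fun s hs => hbN s (by omega : N < s))]
          exact L_mono b (le_max_left _ _)
        omega
      · rw [if_neg h1] at hk
        have := hL t
        omega
    have htail : Aall a' b := IH (deg a') (by omega) a' b rfl hL'
    exact Relation.ReflTransGen.head (Or.inl ⟨Finsupp.single i 1, key⟩) htail

lemma aall_iff_L {a b : Mon} : Aall a b ↔ ∀ t, L t b ≤ L t a :=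
  ⟨L_le_of_aall, fun h => aall_of_L (deg a) a b rfl h⟩

noncomputable def tauFun (v : ℕ) (m : Mon) : Mon :=
  ∑ k ∈ Finset.range v, Finsupp.single (L k m) 1

lemma deg_sum {ι : Type*} (s : Finset ι) (f : ι → Mon) :
    deg (∑ i ∈ s, f i) = ∑ i ∈ s, deg (f i) := by
  classical
  induction s using Finset.induction with
  | empty => simp [deg_zero]
  | insert _ _ h ih => rw [Finset.sum_insert h, Finset.sum_insert h, deg_add, ih]

lemma L_sum {ι : Type*} (t : ℕ) (s : Finset ι) (f : ι → Mon) :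
    L t (∑ i ∈ s, f i) = ∑ i ∈ s, L t (f i) := by
  classical
  induction s using Finset.induction with
  | empty => simp [L]
  | insert _ _ h ih => rw [Finset.sum_insert h, Finset.sum_insert h, L_add, ih]

lemma deg_tauFun (v : ℕ) (m : Mon) : deg (tauFun v m) = v := by
  rw [tauFun, deg_sum]
  simp [deg_single]

lemma L_tauFun (v t : ℕ) (m : Mon) :
    L t (tauFun v m) = ((Finset.range v).filter (fun k => L k m ≤ t)).card := by
  classical
  rw [tauFun, L_sum, Finset.card_filter]
  exact Finset.sum_congr rfl (fun k _ => L_single t (L k m) 1)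

/-- Counting lemma for monotone sequences. -/
lemma count_le_iff {f g : ℕ → ℕ} (hf : Monotone f) (hg : Monotone g) (v : ℕ) :
    (∀ t, ((Finset.range v).filter (fun k => f k ≤ t)).card
        ≤ ((Finset.range v).filter (fun k => g k ≤ t)).card)
      ↔ ∀ k, k < v → g k ≤ f k := by
  classical
  constructor
  · intro h k hk
    have h1 : Finset.range (k+1) ⊆ (Finset.range v).filter (fun k' => f k' ≤ f k) := by
      intro x hx
      rw [Finset.mem_range] at hx
      exact Finset.mem_filter.mpr ⟨Finset.mem_range.mpr (by omega), hf (by omega)⟩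
    have h2 : k + 1 ≤ ((Finset.range v).filter (fun k' => g k' ≤ f k)).card := by
      calc k + 1 = (Finset.range (k+1)).card := (Finset.card_range _).symm
        _ ≤ _ := Finset.card_le_card h1
        _ ≤ _ := h (f k)
    by_contra hc
    push_neg at hc
    have h3 : (Finset.range v).filter (fun k' => g k' ≤ f k) ⊆ Finset.range k := by
      intro x hx
      rw [Finset.mem_filter] at hx
      rw [Finset.mem_range]
      by_contra hxk
      push_neg at hxk
      have := hg hxk
      omega
    have := Finset.card_le_card h3
    rw [Finset.card_range] at this
    omega
  · intro h t
    apply Finset.card_le_card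
    intro x hx
    rw [Finset.mem_filter] at hx ⊢
    exact ⟨hx.1, le_trans (h x (Finset.mem_range.mp hx.1)) hx.2⟩

lemma L_stab {v : ℕ} {m : Mon} (hm : InVars v m) {t : ℕ} (ht : v ≤ t + 1) :
    L t m = deg m := by
  apply L_eq_deg
  intro i hi
  by_contra hc
  have := hm i (Finsupp.mem_support_iff.mpr hc)
  omega

lemma L_all_iff {v : ℕ} (hv : 0 < v) {a b : Mon} (ha : InVars v a) (hb : InVars v b) :
    (∀ t, L t b ≤ L t a) ↔ ∀ k, k < v → L k b ≤ L k a := by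
  constructor
  · exact fun h k _ => h k
  · intro h t
    by_cases ht : t < v
    · exact h t ht
    · rw [L_stab ha (by omega), L_stab hb (by omega)]
      have h1 := h (v-1) (by omega)
      rwa [L_stab ha (by omega), L_stab hb (by omega)] at h1

lemma tau_inj {v : ℕ} (hv : 0 < v) {a b : Mon} (ha : InVars v a) (hb : InVars v b)
    (h : tauFun v a = tauFun v b) : a = b := by
  have hcount : ∀ t, ((Finset.range v).filter (fun k => L k a ≤ t)).card
      = ((Finset.range v).filter (fun k => L k b ≤ t)).card := by
    intro t
    rw [← L_tauFun, ← L_tauFun, h]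
  have h1 : ∀ k, k < v → L k b ≤ L k a :=
    (count_le_iff (L_mono a) (L_mono b) v).mp (fun t => le_of_eq (hcount t))
  have h2 : ∀ k, k < v → L k a ≤ L k b :=
    (count_le_iff (L_mono b) (L_mono a) v).mp (fun t => ge_of_eq (hcount t))
  apply eq_of_L_eq
  intro t
  by_cases ht : t < v
  · exact le_antisymm (h2 t ht) (h1 t ht)
  · rw [L_stab ha (by omega), L_stab hb (by omega)]
    have e1 := le_antisymm (h2 (v-1) (by omega)) (h1 (v-1) (by omega))
    rwa [L_stab ha (by omega), L_stab hb (by omega)] at e1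

lemma sum_single_multiset (lst : List ℕ) :
    ∑ k ∈ Finset.range lst.length, ({lst.getD k 0} : Multiset ℕ) = ↑lst := by
  induction lst with
  | nil => simp
  | cons x xs ih =>
    rw [List.length_cons, Finset.sum_range_succ']
    simp only [List.getD_cons_succ, List.getD_cons_zero]
    rw [ih]
    rw [show ((x :: xs : List ℕ) : Multiset ℕ) = x ::ₘ ↑xs from rfl]
    rw [← Multiset.singleton_add]
    exact add_comm _ _

lemma tau_surj {v : ℕ} (hv : 0 < v) {n : Mon} (hn : deg n = v) :
    ∃ m : Mon, InVars v m ∧ tauFun v m = n := by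
  classical
  set l : List ℕ := Multiset.sort n.toMultiset (· ≤ ·) with hl
  have hlen : l.length = v := by
    rw [hl, Multiset.length_sort]
    rw [show n.toMultiset.card = deg n from by rw [Finsupp.card_toMultiset]; rfl]
    exact hn
  have hsort : l.Pairwise (· ≤ ·) := Multiset.pairwise_sort _ _
  set c : ℕ → ℕ := fun k => l.getD k 0 with hc
  have hcmono : ∀ k1 k2, k1 ≤ k2 → k2 < v → c k1 ≤ c k2 := by
    intro k1 k2 h12 h2v
    simp only [hc]
    have h1l : k1 < l.length := by omega
    have h2l : k2 < l.length := by omega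
    rw [List.getD_eq_getElem l 0 h1l, List.getD_eq_getElem l 0 h2l]
    exact List.Pairwise.rel_get_of_le hsort (by exact_mod_cast h12)
  set m : Mon := Finsupp.onFinset (Finset.range v)
    (fun k => if h : k < v then (if k = 0 then c 0 else c k - c (k-1)) else 0)
    (fun k hk => by
      rw [Finset.mem_range]
      by_contra hc'
      exact hk (dif_neg hc')) with hm
  have hmval : ∀ k, m k = if k < v then (if k = 0 then c 0 else c k - c (k-1)) else 0 := by
    intro k
    rw [hm, Finsupp.onFinset_apply]
    split_ifs with h1 <;> simp [h1]
  have hInV : InVars v m := by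
    intro i hi
    have := Finsupp.mem_support_iff.mp hi
    by_contra hci
    exact this (by rw [hmval, if_neg hci])
  have hLm : ∀ k, k < v → L k m = c k := by
    intro k
    induction k with
    | zero =>
      intro h0
      rw [L_zero_eq, hmval, if_pos h0, if_pos rfl]
    | succ j ih =>
      intro hj
      rw [L_succ, ih (by omega), hmval, if_pos hj, if_neg (by omega)]
      have := hcmono j (j+1) (by omega) hj
      simp only [Nat.add_sub_cancel]
      omega
  refine ⟨m, hInV, ?_⟩
  have hinj : Function.Injective (Finsupp.toMultiset (α := ℕ)) := by
    have : Finsupp.toMultiset (α := ℕ) = (Multiset.toFinsupp (α := ℕ)).symm := rfl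
    rw [this]; exact (Multiset.toFinsupp (α := ℕ)).symm.injective
  apply hinj
  rw [tauFun, map_sum]
  have : ∀ k ∈ Finset.range v, (Finsupp.single (L k m) 1).toMultiset = ({c k} : Multiset ℕ) := by
    intro k hk
    rw [Finsupp.toMultiset_single, hLm k (Finset.mem_range.mp hk), one_nsmul]
  rw [Finset.sum_congr rfl this]
  have := sum_single_multiset l
  rw [hlen] at this
  rw [show (fun k => ({c k} : Multiset ℕ)) = fun k => ({l.getD k 0} : Multiset ℕ) from rfl]
  rw [this, hl, Multiset.sort_eq]

theorem stmt9 (v : ℕ) (hv : 0 < v) :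
    ∃ τ : {m : Mon // InVars v m} → {m : Mon // deg m = v},
      Function.Bijective τ ∧
      ∀ a b : {m : Mon // InVars v m}, Aall a.1 b.1 ↔ Aall (τ b).1 (τ a).1 := by
  classical
  refine ⟨fun a => ⟨tauFun v a.1, deg_tauFun v a.1⟩, ⟨?_, ?_⟩, ?_⟩
  · intro a b h
    exact Subtype.ext (tau_inj hv a.2 b.2 (congrArg Subtype.val h))
  · intro n
    obtain ⟨m, hm, hτ⟩ := tau_surj hv n.2
    exact ⟨⟨m, hm⟩, Subtype.ext hτ⟩
  · intro a b
    rw [aall_iff_L, aall_iff_L, L_all_iff hv a.2 b.2]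
    constructor
    · intro h t
      rw [L_tauFun, L_tauFun]
      exact ((count_le_iff (L_mono a.1) (L_mono b.1) v).mpr h) t
    · intro h
      apply (count_le_iff (L_mono a.1) (L_mono b.1) v).mp
      intro t
      have := h t
      rwa [L_tauFun, L_tauFun] at this
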